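/- Let A and A1 be disjoint c.e. subsets of ℕ such that A ∪ A1 is r-maximal. If A is not Type 1, not Type 2, and not Type 3, then A is Type 10. -/

import Mathlib

open Set Function

/-- A set of naturals is computably enumerable (c.e.) -/
def CESet (A : Set ℕ) : Prop := REPred (· ∈ A)

/-- A set of naturals is computable -/
def ComputableSet (A : Set ℕ) : Prop := ComputablePred (· ∈ A)

/-- X ⊆* Y : X is almost contained in Y -/
def SubsetStar (X Y : Set ℕ) : Prop := (X \ Y).Finite

/-- X =* Y : X and Y differ by a finite set -/
def EqStar (X Y : Set ℕ) : Prop := (X \ Y).Finite ∧ (Y \ X).Finite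

/-- G is a generating set for 𝒟(A): a countable family of c.e. sets, each disjoint
from A, such that every c.e. set disjoint from A is almost covered by finitely many
members of G. -/
def Generates (A : Set ℕ) (G : Set (Set ℕ)) : Prop :=
  G.Countable ∧ (∀ X ∈ G, CESet X) ∧ (∀ X ∈ G, Disjoint X A) ∧
  ∀ D : Set ℕ, CESet D → Disjoint D A →
    ∃ F : Set (Set ℕ), F ⊆ G ∧ F.Finite ∧ SubsetStar D (⋃₀ F)

/-- S is simple -/
def SimpleSet (S : Set ℕ) : Prop :=
  CESet S ∧ Sᶜ.Infinite ∧ ∀ W : Set ℕ, CESet W → Disjoint W S → W.Finite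

/-- A is 𝒟-maximal -/
def DMaximal (A : Set ℕ) : Prop :=
  CESet A ∧ ∀ W : Set ℕ, CESet W → ∃ D : Set ℕ, CESet D ∧ Disjoint D A ∧
    (SubsetStar W (A ∪ D) ∨ EqStar (W ∪ A ∪ D) Set.univ)

/-- M is r-maximal -/
def RMaximal (M : Set ℕ) : Prop :=
  CESet M ∧ Mᶜ.Infinite ∧
    ∀ R : Set ℕ, ComputableSet R → (R ∩ Mᶜ).Finite ∨ (Rᶜ ∩ Mᶜ).Finite

/-- M is maximal -/
def MaximalSet (M : Set ℕ) : Prop :=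
  CESet M ∧ Mᶜ.Infinite ∧
    ∀ W : Set ℕ, CESet W → M ⊆ W → (W \ M).Finite ∨ Wᶜ.Finite

/-- B is atomless -/
def AtomlessSet (B : Set ℕ) : Prop :=
  ∀ C : Set ℕ, CESet C → B ⊆ C → Cᶜ.Infinite →
    ∃ E : Set ℕ, CESet E ∧ SubsetStar C E ∧ (E \ C).Infinite ∧ Eᶜ.Infinite

/-- A0, A1 form a Friedberg splitting of A -/
def FriedbergSplitting (A0 A1 A : Set ℕ) : Prop :=
  CESet A0 ∧ CESet A1 ∧ Disjoint A0 A1 ∧ A0 ∪ A1 = A ∧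
    ∀ W : Set ℕ, CESet W → ¬ CESet (W \ A) → ¬ CESet (W \ A0) ∧ ¬ CESet (W \ A1)

/-- E is a major subset of D -/
def MajorIn (E D : Set ℕ) : Prop :=
  CESet E ∧ CESet D ∧ E ⊆ D ∧ (D \ E).Infinite ∧
    ∀ W : Set ℕ, CESet W → SubsetStar Dᶜ W → SubsetStar Eᶜ W

/-- H is hh-simple: the lattice of c.e. supersets of H mod finite is a boolean algebra -/
def HHSimple (H : Set ℕ) : Prop :=
  CESet H ∧ Hᶜ.Infinite ∧
    ∀ W : Set ℕ, CESet W → ∃ V : Set ℕ, CESet V ∧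
      EqStar ((W ∪ H) ∩ (V ∪ H)) H ∧ EqStar (W ∪ V ∪ H) Set.univ

/-- A is strongly r-separable -/
def StronglyRSeparable (A : Set ℕ) : Prop :=
  ∀ B : Set ℕ, CESet B → Disjoint B A →
    ∃ C : Set ℕ, ComputableSet C ∧ B ⊆ C ∧ Disjoint C A ∧ (C \ B).Infinite

/-- Structure of a Type 5 generating family: D0 together with the R_i. -/
def Type5Family (D0 : Set ℕ) (R : ℕ → Set ℕ) : Prop :=
  CESet D0 ∧ ¬ ComputableSet D0 ∧ D0.Infinite ∧
  Function.Injective R ∧ (∀ i, D0 ≠ R i) ∧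
  (∀ i, ComputableSet (R i) ∧ (R i).Infinite) ∧
  Pairwise (Function.onFun Disjoint R) ∧
  (∀ i, Disjoint D0 (R i))

/-- Structure of a Type 7 generating family: D0 together with the R_i. -/
def Type7Family (D0 : Set ℕ) (R : ℕ → Set ℕ) : Prop :=
  CESet D0 ∧ ¬ ComputableSet D0 ∧
  Function.Injective R ∧ (∀ i, D0 ≠ R i) ∧
  (∀ i, ComputableSet (R i) ∧ (R i).Infinite) ∧
  Pairwise (Function.onFun Disjoint R) ∧
  {i : ℕ | (D0 ∩ R i).Nonempty}.Infinite

/-- Structure of a Type 8 generating family: the D_i together with the R_i. -/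
def Type8Family (D R : ℕ → Set ℕ) : Prop :=
  Function.Injective D ∧ Function.Injective R ∧ (∀ i j, D i ≠ R j) ∧
  (∀ i, CESet (D i) ∧ ¬ ComputableSet (D i)) ∧
  Pairwise (Function.onFun Disjoint D) ∧
  (∀ i, ComputableSet (R i) ∧ (R i).Infinite) ∧
  Pairwise (Function.onFun Disjoint R)

/-- Structure of a Type 9 generating family: the nested D_i together with the R_i. -/
def Type9Family (D R : ℕ → Set ℕ) : Prop :=
  Function.Injective R ∧ (∀ i j, D i ≠ R j) ∧
  (∀ i, ComputableSet (R i) ∧ (R i).Infinite) ∧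
  Pairwise (Function.onFun Disjoint R) ∧
  (∀ i, CESet (D i) ∧ ¬ ComputableSet (D i) ∧ (D i).Infinite) ∧
  (∀ l, D l ⊆ D (l + 1)) ∧
  (∀ l, ¬ CESet (D (l + 1) \ D l)) ∧
  (∀ l, {j : ℕ | (R j \ D l).Infinite}.Infinite)

def IsType1 (G : Set (Set ℕ)) : Prop := G = {∅}

def IsType2 (G : Set (Set ℕ)) : Prop :=
  ∃ R : Set ℕ, G = {R} ∧ ComputableSet R ∧ R.Infinite

def IsType3 (G : Set (Set ℕ)) : Prop :=
  ∃ W : Set ℕ, G = {W} ∧ CESet W ∧ ¬ ComputableSet W ∧ W.Infinite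

def IsType4 (G : Set (Set ℕ)) : Prop :=
  ∃ R : ℕ → Set ℕ, G = Set.range R ∧ Function.Injective R ∧
    (∀ i, ComputableSet (R i) ∧ (R i).Infinite) ∧
    Pairwise (Function.onFun Disjoint R)

def IsType5 (G : Set (Set ℕ)) : Prop :=
  ∃ (D0 : Set ℕ) (R : ℕ → Set ℕ), G = insert D0 (Set.range R) ∧ Type5Family D0 R

def IsType6 (G : Set (Set ℕ)) : Prop :=
  ∃ D : ℕ → Set ℕ, G = Set.range D ∧ Function.Injective D ∧
    (∀ i, CESet (D i) ∧ ¬ ComputableSet (D i) ∧ (D i).Infinite) ∧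
    Pairwise (Function.onFun Disjoint D)

def IsType7 (G : Set (Set ℕ)) : Prop :=
  ∃ (D0 : Set ℕ) (R : ℕ → Set ℕ), G = insert D0 (Set.range R) ∧ Type7Family D0 R

def IsType8 (G : Set (Set ℕ)) : Prop :=
  ∃ D R : ℕ → Set ℕ, G = Set.range D ∪ Set.range R ∧ Type8Family D R

def IsType9 (G : Set (Set ℕ)) : Prop :=
  ∃ D R : ℕ → Set ℕ, G = Set.range D ∪ Set.range R ∧ Type9Family D R

def IsType10 (G : Set (Set ℕ)) : Prop :=
  ∃ D : ℕ → Set ℕ, G = Set.range D ∧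
    (∀ i, CESet (D i) ∧ ¬ ComputableSet (D i) ∧ (D i).Infinite) ∧
    (∀ l, D l ⊆ D (l + 1)) ∧
    (∀ l, ¬ CESet (D (l + 1) \ D l))

/-- G is a generating set of Type n (n = 1, …, 10). -/
def GenTypeN (n : ℕ) (G : Set (Set ℕ)) : Prop :=
  match n with
  | 1 => IsType1 G
  | 2 => IsType2 G
  | 3 => IsType3 G
  | 4 => IsType4 G
  | 5 => IsType5 G
  | 6 => IsType6 G
  | 7 => IsType7 G
  | 8 => IsType8 G
  | 9 => IsType9 G
  | 10 => IsType10 G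
  | _ => False

/-- The c.e. set A is of Type n: 𝒟(A) has a generating set of Type n
but no generating set of any Type m < n. -/
def SetOfType (A : Set ℕ) (n : ℕ) : Prop :=
  (∃ G : Set (Set ℕ), Generates A G ∧ GenTypeN n G) ∧
  ∀ m : ℕ, m < n → ¬ ∃ G : Set (Set ℕ), Generates A G ∧ GenTypeN m G

/-- (F_i) is an A-special list. -/
def ASpecialList (A : Set ℕ) (F : ℕ → Set ℕ) : Prop :=
  F 0 = A ∧ (∀ i, CESet (F i) ∧ ¬ ComputableSet (F i)) ∧
  Pairwise (Function.onFun Disjoint F) ∧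
  ∀ W : Set ℕ, CESet W → ∃ i : ℕ,
    SubsetStar W (⋃ l ≤ i, F l) ∨ EqStar (W ∪ ⋃ l ≤ i, F l) Set.univ

section Toolkit

lemma rePred_and {p q : ℕ → Prop} (hp : REPred p) (hq : REPred q) :
    REPred fun a => p a ∧ q a := by
  unfold REPred at *
  have := hp.bind (f := fun a => Part.assert (p a) fun _ => Part.some ())
    (g := fun (a : ℕ) (_ : Unit) => Part.assert (q a) fun _ => Part.some ())
    ((hq.comp Computable.fst).to₂)
  refine this.of_eq fun a => ?_
  ext u
  simp [Part.assert, Part.mem_bind_iff, Part.mem_assert_iff]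

lemma rePred_or {p q : ℕ → Prop} (hp : REPred p) (hq : REPred q) :
    REPred fun a => p a ∨ q a := by
  obtain ⟨k, pk, hk⟩ := Partrec.merge' hp hq
  have := pk.dom_re
  refine this.of_eq fun a => ?_
  rw [(hk a).2]
  simp [Part.assert]

lemma CESet.union {X Y : Set ℕ} (hX : CESet X) (hY : CESet Y) : CESet (X ∪ Y) :=
  (rePred_or hX hY).of_eq fun a => by simp [Set.mem_union]

lemma computableSet_empty : ComputableSet (∅ : Set ℕ) := by
  rw [ComputableSet, ComputablePred.computable_iff]
  exact ⟨fun _ => false, Computable.const false, by simp⟩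

lemma ceSet_empty : CESet (∅ : Set ℕ) := computableSet_empty.to_re

lemma ComputableSet.union {X Y : Set ℕ} (hX : ComputableSet X) (hY : ComputableSet Y) :
    ComputableSet (X ∪ Y) := by
  rw [ComputableSet, ComputablePred.computable_iff] at *
  obtain ⟨f, hf, hf'⟩ := hX
  obtain ⟨g, hg, hg'⟩ := hY
  refine ⟨fun a => f a || g a, ?_, ?_⟩
  · exact Computable.cond hf (Computable.const true) hg |>.of_eq fun a => by cases f a <;> simp
  · funext a
    have h1 : (a ∈ X) = (f a : Prop) := congrFun hf' a
    have h2 : (a ∈ Y) = (g a : Prop) := congrFun hg' a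
    simp [Set.mem_union, h1, h2]

lemma CESet.diff_computable {X R : Set ℕ} (hX : CESet X) (hR : ComputableSet R) :
    CESet (X \ R) := by
  have : REPred fun a => ¬ (a ∈ R) := (ComputablePred.not hR).to_re
  exact (rePred_and hX this).of_eq fun a => by simp [Set.mem_diff]

open Nat.Partrec (Code)
open Nat.Partrec.Code

lemma ceSet_code {C : Set ℕ} (hC : CESet C) :
    ∃ c : Code, ∀ a, (c.eval a).Dom ↔ a ∈ C := by
  unfold CESet REPred at hC
  have h2 : Partrec fun a => (Part.assert (a ∈ C) fun _ => Part.some ()).map fun _ => 0 :=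
    hC.map ((Computable.const 0).comp Computable.fst).to₂
  obtain ⟨c, hc⟩ := Nat.Partrec.Code.exists_code.mp (Partrec.nat_iff.mp h2)
  refine ⟨c, fun a => ?_⟩
  rw [hc]; simp [Part.assert]

lemma countable_ceSet : {S : Set ℕ | CESet S}.Countable := by
  rw [Set.countable_iff_exists_injective]
  have : ∀ S : {S : Set ℕ | CESet S}, ∃ c : Code, ∀ a, (c.eval a).Dom ↔ a ∈ (S : Set ℕ) :=
    fun S => ceSet_code S.2
  choose f hf using this
  have hinj : Function.Injective f := by
    intro S T h
    apply Subtype.ext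
    ext a
    rw [← hf S a, h, hf T a]
  exact ⟨fun S => Encodable.encode (f S), fun S T h => hinj (Encodable.encode_injective h)⟩

lemma exists_computable_infinite_subset {C : Set ℕ} (hC : CESet C) (hinf : C.Infinite) :
    ∃ R : Set ℕ, ComputableSet R ∧ R ⊆ C ∧ R.Infinite := by
  classical
  obtain ⟨c, hc⟩ := ceSet_code hC
  obtain ⟨a0, ha0⟩ := hinf.nonempty
  set e : ℕ → Option ℕ := fun n =>
    Bool.rec Option.none (some n.unpair.2) (evaln n.unpair.1 c n.unpair.2).isSome with he_def
  have he_comp : Computable e := by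
    have h1 : Primrec fun n : ℕ => (evaln n.unpair.1 c n.unpair.2).isSome :=
      Primrec.option_isSome.comp <| primrec_evaln.comp <|
        ((Primrec.fst.comp Primrec.unpair).pair (Primrec.const c)).pair
          (Primrec.snd.comp Primrec.unpair)
    have h2 : Primrec fun n : ℕ => (some n.unpair.2 : Option ℕ) :=
      Primrec.option_some.comp (Primrec.snd.comp Primrec.unpair)
    have := Primrec.cond h1 h2 (Primrec.const Option.none)
    exact this.to_comp.of_eq fun n => by cases h : (evaln n.unpair.1 c n.unpair.2).isSome <;>
      simp [he_def, h]
  have e_true : ∀ n, (evaln n.unpair.1 c n.unpair.2).isSome = true →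
      e n = some n.unpair.2 := by
    intro n hs
    simp only [he_def]
    rw [hs]
  have e_false : ∀ n, (evaln n.unpair.1 c n.unpair.2).isSome = false → e n = none := by
    intro n hs
    simp only [he_def]
    rw [hs]
  have he_mem : ∀ {x n}, e n = some x → x ∈ C := by
    intro x n h
    cases hs : (evaln n.unpair.1 c n.unpair.2).isSome with
    | false => rw [e_false n hs] at h; exact absurd h (by simp)
    | true =>
      rw [e_true n hs] at h
      obtain ⟨v, hv⟩ := Option.isSome_iff_exists.mp hs
      have hvm : v ∈ evaln n.unpair.1 c n.unpair.2 := hv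
      have hvv : v ∈ c.eval n.unpair.2 := evaln_sound hvm
      have : n.unpair.2 ∈ C := (hc _).mp (Part.dom_iff_mem.mpr ⟨v, hvv⟩)
      rwa [← Option.some_inj.mp h]
  have he_sur : ∀ {x}, x ∈ C → ∃ n, e n = some x := by
    intro x hx
    have hd : (c.eval x).Dom := (hc x).mpr hx
    obtain ⟨v, hv⟩ := Part.dom_iff_mem.mp hd
    obtain ⟨k, hk⟩ := evaln_complete.mp hv
    refine ⟨Nat.pair k x, ?_⟩
    have hs : (evaln (Nat.pair k x).unpair.1 c (Nat.pair k x).unpair.2).isSome = true := by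
      simp only [Nat.unpair_pair]
      exact Option.isSome_iff_exists.mpr ⟨v, hk⟩
    rw [e_true _ hs]
    simp
  set e' : ℕ → ℕ := fun n => (e n).getD a0 with he'_def
  have he'_comp : Computable e' := Computable.option_getD he_comp (Computable.const a0)
  have he'C : ∀ n, e' n ∈ C := by
    intro n
    cases h : e n with
    | none => simp only [he'_def, h, Option.getD_none]; exact ha0
    | some x => simp only [he'_def, h, Option.getD_some]; exact he_mem h
  have he'sur : ∀ x ∈ C, ∃ n, e' n = x := by
    intro x hx
    obtain ⟨n, hn⟩ := he_sur hx
    exact ⟨n, by simp only [he'_def, hn, Option.getD_some]⟩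
  have hex : ∀ m : ℕ, ∃ k, m < e' k := by
    intro m
    obtain ⟨b, hb, hmb⟩ := hinf.exists_gt m
    obtain ⟨k, hk⟩ := he'sur b hb
    exact ⟨k, hk ▸ hmb⟩
  set g : ℕ → ℕ := fun m => e' (Nat.find (hex m)) with hg_def
  have hg1 : ∀ m, m < g m := fun m => Nat.find_spec (hex m)
  have hgC : ∀ m, g m ∈ C := fun m => he'C _
  have hg_comp : Computable g := by
    have hlt : Computable₂ fun m k => (decide (m < e' k) : Bool) :=
      Primrec.nat_lt.decide.to_comp.comp Computable.fst (he'_comp.comp Computable.snd)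
    have hrf : Partrec fun m => Nat.rfind fun k => (Part.some (decide (m < e' k)) : Part Bool) :=
      Partrec.rfind hlt.partrec₂
    have hmap : Partrec fun m =>
        (Nat.rfind fun k => (Part.some (decide (m < e' k)) : Part Bool)).map e' :=
      hrf.map (he'_comp.comp Computable.snd).to₂
    refine Partrec.of_eq_tot hmap fun m => ?_
    rw [Part.mem_map_iff]
    refine ⟨Nat.find (hex m), ?_, rfl⟩
    apply Nat.mem_rfind.mpr
    constructor
    · simp [Nat.find_spec (hex m)]
    · intro k hk
      simp [Nat.find_min (hex m) hk]
  set u : ℕ → ℕ := fun n => Nat.rec (g 0) (fun _ ih => g ih) n with hu_def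
  have hu_comp : Computable u := by
    have hh : Computable₂ fun (_ : ℕ) (p : ℕ × ℕ) => g p.2 :=
      hg_comp.comp (Computable.snd.comp Computable.snd)
    exact (Computable.nat_rec Computable.id (Computable.const (g 0)) hh).of_eq fun n => by
      simp [hu_def]
  have hu_succ : ∀ n, u (n + 1) = g (u n) := fun n => rfl
  have hu_mono : StrictMono u := strictMono_nat_of_lt_succ fun n => by
    rw [hu_succ]; exact hg1 (u n)
  have hu_mem : ∀ n, u n ∈ C := by
    intro n
    induction n with
    | zero => exact hgC 0
    | succ n _ => rw [hu_succ]; exact hgC (u n)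
  have haux : ∀ (x k : ℕ),
      (Nat.rec false (fun n ih => ih || decide (u n = x)) k : Bool) = true ↔ ∃ n < k, u n = x := by
    intro x k
    induction k with
    | zero => simp
    | succ k ih =>
      simp only [Nat.rec_add_one, Bool.or_eq_true, decide_eq_true_eq, ih]
      constructor
      · rintro (⟨n, hn, h⟩ | h)
        · exact ⟨n, Nat.lt_succ_of_lt hn, h⟩
        · exact ⟨k, Nat.lt_succ_self k, h⟩
      · rintro ⟨n, hn, h⟩
        rcases Nat.lt_succ_iff_lt_or_eq.mp hn with h' | rfl
        · exact Or.inl ⟨n, h', h⟩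
        · exact Or.inr h
  set b : ℕ → Bool := fun x => Nat.rec false (fun n ih => ih || decide (u n = x)) (x + 1)
    with hb_def
  have hb_comp : Computable b := by
    have hh : Computable₂ fun (x : ℕ) (p : ℕ × Bool) => (p.2 || decide (u p.1 = x) : Bool) := by
      have h1 : Computable fun q : ℕ × (ℕ × Bool) => q.2.2 :=
        Computable.snd.comp Computable.snd
      have h2 : Computable fun q : ℕ × (ℕ × Bool) => (decide (u q.2.1 = q.1) : Bool) :=
        Primrec.eq.decide.to_comp.comp (hu_comp.comp (Computable.fst.comp Computable.snd))
          Computable.fst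
      exact (Computable.cond h1 (Computable.const true) h2).of_eq fun q => by
        cases hq : q.2.2 <;> simp [hq]
    exact (Computable.nat_rec Computable.succ (Computable.const false) hh).of_eq fun x => by
      simp [hb_def]
  have hb_iff : ∀ x, (b x : Prop) ↔ x ∈ Set.range u := by
    intro x
    constructor
    · intro h
      obtain ⟨n, _, hn⟩ := (haux x (x + 1)).mp h
      exact ⟨n, hn⟩
    · rintro ⟨n, rfl⟩
      exact (haux (u n) (u n + 1)).mpr ⟨n, Nat.lt_succ_of_le hu_mono.le_apply, rfl⟩
  refine ⟨Set.range u, ?_, ?_, Set.infinite_range_of_injective hu_mono.injective⟩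
  · rw [ComputableSet, ComputablePred.computable_iff]
    exact ⟨b, hb_comp, funext fun x => (propext (hb_iff x)).symm⟩
  · rintro _ ⟨n, rfl⟩; exact hu_mem n

lemma ceSet_finset_biUnion {D : ℕ → Set ℕ} (hD : ∀ i, CESet (D i)) (S : Finset ℕ) :
    CESet (⋃ i ∈ S, D i) := by
  classical
  induction S using Finset.induction_on with
  | empty => exact ceSet_empty.of_eq fun a => by simp
  | @insert a s ha ih =>
    rw [Finset.set_biUnion_insert]
    exact (hD a).union ih

lemma computableSet_finset_biUnion {R : ℕ → Set ℕ} (hR : ∀ i, ComputableSet (R i))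
    (S : Finset ℕ) : ComputableSet (⋃ i ∈ S, R i) := by
  classical
  induction S using Finset.induction_on with
  | empty => exact computableSet_empty.of_eq fun a => by simp
  | @insert a s ha ih =>
    rw [Finset.set_biUnion_insert]
    exact (hR a).union ih

lemma sUnion_decomp {D R : ℕ → Set ℕ} {F : Set (Set ℕ)} (hF : F.Finite)
    (hsub : F ⊆ Set.range D ∪ Set.range R) :
    ∃ S T : Finset ℕ, ⋃₀ F ⊆ (⋃ i ∈ S, D i) ∪ ⋃ j ∈ T, R j := by
  classical
  refine ⟨hF.toFinset.image fun X => if h : ∃ i, D i = X then h.choose else 0,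
          hF.toFinset.image fun X => if h : ∃ j, R j = X then h.choose else 0, ?_⟩
  rintro x ⟨X, hXF, hxX⟩
  rcases hsub hXF with ⟨i, hi⟩ | ⟨j, hj⟩
  · left
    have h : ∃ i, D i = X := ⟨i, hi⟩
    refine Set.mem_biUnion (Finset.mem_image.mpr ⟨X, hF.mem_toFinset.mpr hXF, dif_pos h⟩) ?_
    rw [h.choose_spec]; exact hxX
  · right
    have h : ∃ j, R j = X := ⟨j, hj⟩
    refine Set.mem_biUnion (Finset.mem_image.mpr ⟨X, hF.mem_toFinset.mpr hXF, dif_pos h⟩) ?_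
    rw [h.choose_spec]; exact hxX

lemma generates_singleton (A X : Set ℕ) (hX : CESet X) (hXA : Disjoint X A)
    (hcov : ∀ D, CESet D → Disjoint D A → (D \ X).Finite) : Generates A {X} := by
  refine ⟨Set.countable_singleton _, ?_, ?_, ?_⟩
  · intro Y hY; rw [Set.mem_singleton_iff] at hY; subst hY; exact hX
  · intro Y hY; rw [Set.mem_singleton_iff] at hY; subst hY; exact hXA
  · intro D hD hDA
    refine ⟨{X}, subset_rfl, Set.finite_singleton _, ?_⟩
    unfold SubsetStar
    rw [Set.sUnion_singleton]
    exact hcov D hD hDA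

end Toolkit


theorem stmt_11 (A A1 : Set ℕ) (hA : CESet A) (hA1 : CESet A1)
    (hdisj : Disjoint A A1) (hrmax : RMaximal (A ∪ A1))
    (h1 : ¬ SetOfType A 1) (h2 : ¬ SetOfType A 2) (h3 : ¬ SetOfType A 3) :
    SetOfType A 10 := by
  classical
  obtain ⟨hMce, hMcinf, hMr⟩ := hrmax
  have t0 : ¬ ∃ G : Set (Set ℕ), Generates A G ∧ GenTypeN 0 G := by
    rintro ⟨G, -, hG⟩; exact hG
  have t1 : ¬ ∃ G : Set (Set ℕ), Generates A G ∧ GenTypeN 1 G := by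
    rintro ⟨G, hg, hG⟩
    refine h1 ⟨⟨G, hg, hG⟩, ?_⟩
    intro m hm
    interval_cases m
    · exact t0
  have t2 : ¬ ∃ G : Set (Set ℕ), Generates A G ∧ GenTypeN 2 G := by
    rintro ⟨G, hg, hG⟩
    refine h2 ⟨⟨G, hg, hG⟩, ?_⟩
    intro m hm
    interval_cases m
    · exact t0
    · exact t1
  have t3 : ¬ ∃ G : Set (Set ℕ), Generates A G ∧ GenTypeN 3 G := by
    rintro ⟨G, hg, hG⟩
    refine h3 ⟨⟨G, hg, hG⟩, ?_⟩
    intro m hm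
    interval_cases m
    · exact t0
    · exact t1
    · exact t2
  -- no singleton generating set
  have hLS : ∀ X : Set ℕ, ¬ Generates A {X} := by
    intro X hg
    have hXce : CESet X := hg.2.1 X rfl
    have hXA : Disjoint X A := hg.2.2.1 X rfl
    by_cases hfin : X.Finite
    · refine t1 ⟨{∅}, ?_, rfl⟩
      refine generates_singleton A ∅ ceSet_empty (Set.empty_disjoint A) ?_
      intro D hD hDA
      obtain ⟨F, hFs, hFf, hss⟩ := hg.2.2.2 D hD hDA
      have hss' : (D \ ⋃₀ F).Finite := hss
      have hDfin : D.Finite := by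
        have hsub : D ⊆ (D \ ⋃₀ F) ∪ X := by
          intro x hx
          by_cases hxF : x ∈ ⋃₀ F
          · obtain ⟨Y, hYF, hxY⟩ := hxF
            have hYX : Y = X := Set.mem_singleton_iff.mp (hFs hYF)
            exact Or.inr (hYX ▸ hxY)
          · exact Or.inl ⟨hx, hxF⟩
        exact (hss'.union hfin).subset hsub
      exact hDfin.subset Set.diff_subset
    · by_cases hcomp : ComputableSet X
      · exact t2 ⟨{X}, hg, ⟨X, rfl, hcomp, hfin⟩⟩
      · exact t3 ⟨{X}, hg, ⟨X, rfl, hXce, hcomp, hfin⟩⟩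
  have hMcmem : ∀ {x : ℕ}, x ∉ A → x ∉ A1 → x ∈ (A ∪ A1)ᶜ := by
    intro x hxA hxA1
    simp [hxA, hxA1]
  -- generic witness extraction
  have hW : ∀ X : Set ℕ, CESet X → Disjoint X A →
      ∃ W : Set ℕ, CESet W ∧ Disjoint W A ∧ (W \ X).Infinite := by
    intro X hX hXA
    by_contra hno
    push_neg at hno
    refine hLS X (generates_singleton A X hX hXA ?_)
    intro D hD hDA
    exact hno D hD hDA
  -- L1 : no c.e. set disjoint from A almost covers Mᶜ
  have hL1 : ∀ E : Set ℕ, CESet E → Disjoint E A → ((A ∪ A1)ᶜ \ E).Infinite := by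
    intro E hE hEA hfin
    refine hLS (A1 ∪ E) (generates_singleton A _ (hA1.union hE)
      (Set.disjoint_union_left.mpr ⟨hdisj.symm, hEA⟩) ?_)
    intro D hD hDA
    refine hfin.subset ?_
    rintro x ⟨hxD, hxU⟩
    have hx1 : x ∉ A1 := fun h => hxU (Or.inl h)
    have hx2 : x ∉ E := fun h => hxU (Or.inr h)
    exact ⟨hMcmem (Set.disjoint_left.mp hDA hxD) hx1, hx2⟩
  -- L2 : computable sets disjoint from A only meet Mᶜ finitely
  have hL2 : ∀ R : Set ℕ, ComputableSet R → Disjoint R A → (R ∩ (A ∪ A1)ᶜ).Finite := by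
    intro R hR hRA
    rcases hMr R hR with h | h
    · exact h
    · exact absurd (h.subset fun x hx => ⟨hx.2, hx.1⟩)
        (hL1 R (ComputablePred.to_re hR) hRA)
  -- immunity : c.e. sets disjoint from A almost inside Mᶜ are finite
  have hIMM : ∀ C : Set ℕ, CESet C → Disjoint C A → (C ∩ (A ∪ A1)).Finite → C.Finite := by
    intro C hC hCA hCM
    by_contra hinf
    obtain ⟨R, hRcomp, hRC, hRinf⟩ := exists_computable_infinite_subset hC hinf
    have h2 := hL2 R hRcomp (hCA.mono_left hRC)
    refine hRinf ((hCM.union h2).subset ?_)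
    intro x hx
    by_cases hxM : x ∈ A ∪ A1
    · exact Or.inl ⟨hRC hx, hxM⟩
    · exact Or.inr ⟨hx, hxM⟩
  -- noncomputability criterion
  have hNC : ∀ X : Set ℕ, Disjoint X A → (X \ A1).Infinite → ¬ ComputableSet X := by
    intro X hXA hXinf hcomp
    refine hXinf ((hL2 X hcomp hXA).subset ?_)
    rintro x ⟨hxX, hxA1⟩
    exact ⟨hxX, hMcmem (Set.disjoint_left.mp hXA hxX) hxA1⟩
  -- exclusion of type 4
  have t4 : ¬ ∃ G : Set (Set ℕ), Generates A G ∧ GenTypeN 4 G := by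
    rintro ⟨G, hg, R, rfl, hRinj, hRprop, hRpd⟩
    refine hLS A1 (generates_singleton A A1 hA1 hdisj.symm ?_)
    intro D hD hDA
    obtain ⟨F, hFs, hFf, hss⟩ := hg.2.2.2 D hD hDA
    have hss' : (D \ ⋃₀ F).Finite := hss
    obtain ⟨S, T, hST⟩ := sUnion_decomp (D := fun _ => (∅ : Set ℕ)) hFf
      (hFs.trans fun X hX => Or.inr hX)
    have hfinU : (⋃ j ∈ T, (R j ∩ (A ∪ A1)ᶜ)).Finite :=
      T.finite_toSet.biUnion fun j _ => hL2 (R j) (hRprop j).1 (hg.2.2.1 (R j) ⟨j, rfl⟩)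
    refine (hss'.union hfinU).subset ?_
    rintro x ⟨hxD, hxA1⟩
    by_cases hxF : x ∈ ⋃₀ F
    · rcases hST hxF with he | hRx
      · simp at he
      · right
        simp only [Set.mem_iUnion] at hRx ⊢
        obtain ⟨j, hjT, hxj⟩ := hRx
        exact ⟨j, hjT, hxj, hMcmem (Set.disjoint_left.mp hDA hxD) hxA1⟩
    · exact Or.inl ⟨hxD, hxF⟩
  -- exclusion of types 5 and 7
  have t57 : ∀ (D0 : Set ℕ) (R : ℕ → Set ℕ),
      Generates A (insert D0 (Set.range R)) → (∀ j, ComputableSet (R j)) → False := by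
    intro D0 R hg hRcomp
    have hD0 : CESet D0 := hg.2.1 D0 (Set.mem_insert _ _)
    have hD0A : Disjoint D0 A := hg.2.2.1 D0 (Set.mem_insert _ _)
    refine hLS (A1 ∪ D0) (generates_singleton A _ (hA1.union hD0)
      (Set.disjoint_union_left.mpr ⟨hdisj.symm, hD0A⟩) ?_)
    intro D hD hDA
    obtain ⟨F, hFs, hFf, hss⟩ := hg.2.2.2 D hD hDA
    have hss' : (D \ ⋃₀ F).Finite := hss
    obtain ⟨S, T, hST⟩ := sUnion_decomp (D := fun _ => D0) hFf
      (hFs.trans (by rintro X (rfl | ⟨j, rfl⟩); exacts [Or.inl ⟨0, rfl⟩, Or.inr ⟨j, rfl⟩]))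
    have hfinU : (⋃ j ∈ T, (R j ∩ (A ∪ A1)ᶜ)).Finite :=
      T.finite_toSet.biUnion fun j _ => hL2 (R j) (hRcomp j)
        (hg.2.2.1 (R j) (Set.mem_insert_of_mem _ ⟨j, rfl⟩))
    refine (hss'.union hfinU).subset ?_
    rintro x ⟨hxD, hxU⟩
    have hxA1 : x ∉ A1 := fun h => hxU (Or.inl h)
    have hxD0 : x ∉ D0 := fun h => hxU (Or.inr h)
    by_cases hxF : x ∈ ⋃₀ F
    · rcases hST hxF with hD0' | hRx
      · simp only [Set.mem_iUnion] at hD0'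
        obtain ⟨i, _, hx0⟩ := hD0'
        exact absurd hx0 hxD0
      · right
        simp only [Set.mem_iUnion] at hRx ⊢
        obtain ⟨j, hjT, hxj⟩ := hRx
        exact ⟨j, hjT, hxj, hMcmem (Set.disjoint_left.mp hDA hxD) hxA1⟩
    · exact Or.inl ⟨hxD, hxF⟩
  have t5 : ¬ ∃ G : Set (Set ℕ), Generates A G ∧ GenTypeN 5 G := by
    rintro ⟨G, hg, D0, R, rfl, hfam⟩
    exact t57 D0 R hg fun j => (hfam.2.2.2.2.2.1 j).1
  have t7 : ¬ ∃ G : Set (Set ℕ), Generates A G ∧ GenTypeN 7 G := by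
    rintro ⟨G, hg, D0, R, rfl, hfam⟩
    exact t57 D0 R hg fun j => (hfam.2.2.2.2.1 j).1
  -- exclusion of type 6
  have t6 : ¬ ∃ G : Set (Set ℕ), Generates A G ∧ GenTypeN 6 G := by
    rintro ⟨G, hg, D, rfl, hDinj, hDprop, hDpd⟩
    obtain ⟨F, hFs, hFf, hss⟩ := hg.2.2.2 A1 hA1 hdisj.symm
    have hss' : (A1 \ ⋃₀ F).Finite := hss
    obtain ⟨S, T, hST⟩ := sUnion_decomp (R := fun _ => (∅ : Set ℕ)) hFf
      (hFs.trans fun X hX => Or.inl hX)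
    obtain ⟨i0, hi0⟩ : ∃ i0, i0 ∉ S := ⟨S.sup id + 1, fun h => by
      have := Finset.le_sup (f := id) h
      simp only [id] at this
      omega⟩
    have hDi0A : Disjoint (D i0) A := hg.2.2.1 (D i0) ⟨i0, rfl⟩
    have hfin : ((D i0) ∩ (A ∪ A1)).Finite := by
      refine hss'.subset ?_
      rintro x ⟨hxD, hxM⟩
      have hxA : x ∉ A := Set.disjoint_left.mp hDi0A hxD
      refine ⟨hxM.resolve_left hxA, fun hxF => ?_⟩
      rcases hST hxF with hDx | hex
      · simp only [Set.mem_iUnion] at hDx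
        obtain ⟨i, hiS, hxi⟩ := hDx
        have hne : i0 ≠ i := fun h => hi0 (h ▸ hiS)
        exact Set.disjoint_left.mp (hDpd hne) hxD hxi
      · simp at hex
    exact (hDprop i0).2.2 (hIMM (D i0) (hDprop i0).1 hDi0A hfin)
  -- exclusion of type 9
  have t9 : ¬ ∃ G : Set (Set ℕ), Generates A G ∧ GenTypeN 9 G := by
    rintro ⟨G, hg, D, R, rfl, hRinj, hDRne, hRprop, hRpd, hDprop, hnest, hdiffs, hRD⟩
    have hmono : Monotone D := monotone_nat_of_le_succ hnest
    obtain ⟨F, hFs, hFf, hss⟩ := hg.2.2.2 A1 hA1 hdisj.symm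
    have hss' : (A1 \ ⋃₀ F).Finite := hss
    obtain ⟨S, T, hST⟩ := sUnion_decomp hFf hFs
    obtain ⟨j0, hj0mem, hj0T⟩ := ((hRD (S.sup id)).diff T.finite_toSet).nonempty
    have hRj0A : Disjoint (R j0) A := hg.2.2.1 (R j0) (Or.inr ⟨j0, rfl⟩)
    refine hj0mem ?_
    have hMcf := hL2 (R j0) (hRprop j0).1 hRj0A
    refine (hss'.union hMcf).subset ?_
    rintro x ⟨hxR, hxD⟩
    have hxA : x ∉ A := Set.disjoint_left.mp hRj0A hxR
    by_cases hxA1 : x ∈ A1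
    · left
      refine ⟨hxA1, fun hxF => ?_⟩
      rcases hST hxF with hDx | hRx
      · simp only [Set.mem_iUnion] at hDx
        obtain ⟨i, hiS, hxi⟩ := hDx
        exact hxD (hmono (Finset.le_sup (f := id) hiS) hxi)
      · simp only [Set.mem_iUnion] at hRx
        obtain ⟨j, hjT, hxj⟩ := hRx
        have hne : j ≠ j0 := fun h => hj0T (h ▸ hjT)
        exact Set.disjoint_left.mp (hRpd hne) hxj hxR
    · exact Or.inr ⟨hxR, hMcmem hxA hxA1⟩
  -- exclusion of type 8
  have t8 : ¬ ∃ G : Set (Set ℕ), Generates A G ∧ GenTypeN 8 G := by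
    rintro ⟨G, hg, D, R, rfl, hDinj, hRinj, hDRne, hDprop, hDpd, hRprop, hRpd⟩
    have hDA : ∀ i, Disjoint (D i) A := fun i => hg.2.2.1 _ (Or.inl ⟨i, rfl⟩)
    have hRA : ∀ j, Disjoint (R j) A := fun j => hg.2.2.1 _ (Or.inr ⟨j, rfl⟩)
    obtain ⟨F, hFs, hFf, hss⟩ := hg.2.2.2 A1 hA1 hdisj.symm
    have hss' : (A1 \ ⋃₀ F).Finite := hss
    obtain ⟨S, T, hST⟩ := sUnion_decomp hFf hFs
    have hRscomp : ComputableSet (⋃ j ∈ T, R j) :=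
      computableSet_finset_biUnion (fun j => (hRprop j).1) T
    have hRsMc : ((⋃ j ∈ T, R j) ∩ (A ∪ A1)ᶜ).Finite := by
      have hfin : (⋃ j ∈ T, (R j ∩ (A ∪ A1)ᶜ)).Finite :=
        T.finite_toSet.biUnion fun j _ => hL2 (R j) (hRprop j).1 (hRA j)
      refine hfin.subset ?_
      rintro x ⟨hxRs, hxMc⟩
      simp only [Set.mem_iUnion] at hxRs ⊢
      obtain ⟨j, hjT, hxj⟩ := hxRs
      exact ⟨j, hjT, hxj, hxMc⟩
    have step1 : ∀ i, i ∉ S → ((D i) ∩ (A ∪ A1)ᶜ).Finite := by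
      intro i hiS
      have hCi : CESet (D i \ ⋃ j ∈ T, R j) := CESet.diff_computable (hDprop i).1 hRscomp
      have hCiA : Disjoint (D i \ ⋃ j ∈ T, R j) A := (hDA i).mono_left Set.diff_subset
      have hCiM : ((D i \ ⋃ j ∈ T, R j) ∩ (A ∪ A1)).Finite := by
        refine hss'.subset ?_
        rintro x ⟨⟨hxD, hxRs⟩, hxM⟩
        have hxA : x ∉ A := Set.disjoint_left.mp (hDA i) hxD
        refine ⟨hxM.resolve_left hxA, fun hxF => ?_⟩
        rcases hST hxF with hDx | hRx
        · simp only [Set.mem_iUnion] at hDx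
          obtain ⟨i', hi'S, hxi'⟩ := hDx
          have hne : i ≠ i' := fun h => hiS (h ▸ hi'S)
          exact Set.disjoint_left.mp (hDpd hne) hxD hxi'
        · exact hxRs hRx
      have hCifin : (D i \ ⋃ j ∈ T, R j).Finite := hIMM _ hCi hCiA hCiM
      refine (hCifin.union hRsMc).subset ?_
      rintro x ⟨hxD, hxMc⟩
      by_cases hxRs : x ∈ ⋃ j ∈ T, R j
      · exact Or.inr ⟨hxRs, hxMc⟩
      · exact Or.inl ⟨hxD, hxRs⟩
    have hXSce : CESet (A1 ∪ ⋃ i ∈ S, D i) :=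
      hA1.union (ceSet_finset_biUnion (fun i => (hDprop i).1) S)
    have hXSA : Disjoint (A1 ∪ ⋃ i ∈ S, D i) A := by
      refine Set.disjoint_union_left.mpr ⟨hdisj.symm, ?_⟩
      rw [Set.disjoint_left]
      intro x hx
      simp only [Set.mem_iUnion] at hx
      obtain ⟨i, _, hxi⟩ := hx
      exact Set.disjoint_left.mp (hDA i) hxi
    obtain ⟨W, hWce, hWA, hWinf⟩ := hW _ hXSce hXSA
    have hWXSMc : W \ (A1 ∪ ⋃ i ∈ S, D i) ⊆ (A ∪ A1)ᶜ := by
      rintro x ⟨hxW, hxXS⟩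
      exact hMcmem (Set.disjoint_left.mp hWA hxW) (fun h => hxXS (Or.inl h))
    obtain ⟨F', hF's, hF'f, hss2⟩ := hg.2.2.2 W hWce hWA
    have hss2' : (W \ ⋃₀ F').Finite := hss2
    obtain ⟨S', T', hST'⟩ := sUnion_decomp hF'f hF's
    have hex : ∃ i ∈ S', i ∉ S ∧ ((D i) ∩ (W \ (A1 ∪ ⋃ i ∈ S, D i))).Infinite := by
      by_contra hcon
      push_neg at hcon
      refine hWinf ?_
      have hpieces : (⋃ i ∈ S', (D i ∩ (W \ (A1 ∪ ⋃ i ∈ S, D i)))).Finite := by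
        refine S'.finite_toSet.biUnion fun i hiS' => ?_
        by_cases hiS : i ∈ S
        · refine Set.Finite.subset Set.finite_empty ?_
          rintro x ⟨hxD, _, hxXS⟩
          exact absurd (Or.inr (Set.mem_biUnion hiS hxD)) hxXS
        · exact hcon i hiS' hiS
      have hTfin : (⋃ j ∈ T', (R j ∩ (A ∪ A1)ᶜ)).Finite :=
        T'.finite_toSet.biUnion fun j _ => hL2 (R j) (hRprop j).1 (hRA j)
      refine ((hss2'.union hpieces).union hTfin).subset ?_
      rintro x hx
      by_cases hxF : x ∈ ⋃₀ F'
      · rcases hST' hxF with hDx | hRx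
        · simp only [Set.mem_iUnion] at hDx
          obtain ⟨i, hiS', hxi⟩ := hDx
          exact Or.inl (Or.inr (Set.mem_biUnion hiS' ⟨hxi, hx⟩))
        · simp only [Set.mem_iUnion] at hRx
          obtain ⟨j, hjT', hxj⟩ := hRx
          exact Or.inr (Set.mem_biUnion hjT' ⟨hxj, hWXSMc hx⟩)
      · exact Or.inl (Or.inl ⟨hx.1, hxF⟩)
    obtain ⟨i, hiS', hiS, hinf2⟩ := hex
    have hfinal : ((D i) ∩ (A ∪ A1)ᶜ).Infinite := by
      refine hinf2.mono ?_
      rintro x ⟨hxD, hxW⟩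
      exact ⟨hxD, hWXSMc hxW⟩
    exact hfinal (step1 i hiS)
  -- construction of the type 10 tower
  have hScnt : {S : Set ℕ | CESet S ∧ Disjoint S A}.Countable :=
    Set.Countable.mono (fun S hS => hS.1) countable_ceSet
  obtain ⟨V, hV⟩ := hScnt.exists_eq_range ⟨A1, hA1, hdisj.symm⟩
  have hVmem : ∀ k, CESet (V k) ∧ Disjoint (V k) A := by
    intro k
    have : V k ∈ {S : Set ℕ | CESet S ∧ Disjoint S A} := by rw [hV]; exact ⟨k, rfl⟩
    exact this
  obtain ⟨Dst, hDstce, hDstA, hDstinf⟩ := hW A1 hA1 hdisj.symm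
  have hstep : ∀ (k : ℕ) (X : Set ℕ), CESet X ∧ Disjoint X A →
      ∃ Y : Set ℕ, (CESet Y ∧ Disjoint Y A) ∧ X ∪ V k ⊆ Y ∧ (Y \ X).Infinite := by
    intro k X hX
    have hT : CESet (X ∪ V k) := hX.1.union (hVmem k).1
    have hTA : Disjoint (X ∪ V k) A := Set.disjoint_union_left.mpr ⟨hX.2, (hVmem k).2⟩
    obtain ⟨W, hWce, hWA, hWinf⟩ := hW _ hT hTA
    refine ⟨X ∪ V k ∪ W, ⟨hT.union hWce, Set.disjoint_union_left.mpr ⟨hTA, hWA⟩⟩,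
      Set.subset_union_left, ?_⟩
    refine hWinf.mono ?_
    rintro x ⟨hxW, hxT⟩
    exact ⟨Or.inr hxW, fun hxX => hxT (Or.inl hxX)⟩
  choose st hst1 hst2 hst3 using hstep
  have hbase : CESet (A1 ∪ Dst ∪ V 0) ∧ Disjoint (A1 ∪ Dst ∪ V 0) A :=
    ⟨(hA1.union hDstce).union (hVmem 0).1,
      Set.disjoint_union_left.mpr ⟨Set.disjoint_union_left.mpr ⟨hdisj.symm, hDstA⟩, (hVmem 0).2⟩⟩
  let Q : ℕ → {X : Set ℕ // CESet X ∧ Disjoint X A} := fun n =>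
    Nat.rec ⟨A1 ∪ Dst ∪ V 0, hbase⟩ (fun k p => ⟨st (k + 1) p.1 p.2, hst1 (k + 1) p.1 p.2⟩) n
  set DD : ℕ → Set ℕ := fun n => (Q n).1 with hDD
  have hQce : ∀ n, CESet (DD n) := fun n => (Q n).2.1
  have hQA : ∀ n, Disjoint (DD n) A := fun n => (Q n).2.2
  have hQs : ∀ n, DD n ∪ V (n + 1) ⊆ DD (n + 1) := fun n => hst2 (n + 1) (Q n).1 (Q n).2
  have hQd : ∀ n, (DD (n + 1) \ DD n).Infinite := fun n => hst3 (n + 1) (Q n).1 (Q n).2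
  have hQmono : ∀ n, DD n ⊆ DD (n + 1) := fun n => Set.subset_union_left.trans (hQs n)
  have hQV : ∀ n, V n ⊆ DD n := by
    intro n
    cases n with
    | zero => exact Set.subset_union_right
    | succ n => exact Set.subset_union_right.trans (hQs n)
  have hQbase : ∀ n, A1 ∪ Dst ⊆ DD n := by
    intro n
    induction n with
    | zero => exact Set.subset_union_left
    | succ n ih => exact ih.trans (hQmono n)
  have hQinfdiff : ∀ n, (DD n \ A1).Infinite := fun n =>
    hDstinf.mono fun x hx => ⟨hQbase n (Or.inr hx.1), hx.2⟩
  have hQinf : ∀ n, (DD n).Infinite := fun n => (hQinfdiff n).mono Set.diff_subset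
  have hQnc : ∀ n, ¬ ComputableSet (DD n) := fun n => hNC (DD n) (hQA n) (hQinfdiff n)
  have hQdMc : ∀ n, DD (n + 1) \ DD n ⊆ (A ∪ A1)ᶜ := by
    intro n x hx
    exact hMcmem (Set.disjoint_left.mp (hQA (n + 1)) hx.1)
      (fun h => hx.2 (hQbase n (Or.inl h)))
  have hQdnce : ∀ n, ¬ CESet (DD (n + 1) \ DD n) := by
    intro n hce
    refine hQd n (hIMM _ hce ((hQA (n + 1)).mono_left Set.diff_subset) ?_)
    refine Set.Finite.subset Set.finite_empty ?_
    rintro x ⟨hx1, hx2⟩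
    exact (hQdMc n hx1) hx2
  have hGen : Generates A (Set.range DD) := by
    refine ⟨Set.countable_range DD, ?_, ?_, ?_⟩
    · rintro X ⟨n, rfl⟩; exact hQce n
    · rintro X ⟨n, rfl⟩; exact hQA n
    · intro E hE hEA
      have hEr : E ∈ Set.range V := by rw [← hV]; exact ⟨hE, hEA⟩
      obtain ⟨k, rfl⟩ := hEr
      refine ⟨{DD k}, ?_, Set.finite_singleton _, ?_⟩
      · rw [Set.singleton_subset_iff]; exact ⟨k, rfl⟩
      · show (V k \ ⋃₀ {DD k}).Finite
        rw [Set.sUnion_singleton]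
        refine Set.Finite.subset Set.finite_empty ?_
        rintro x ⟨hxE, hxD⟩
        exact hxD (hQV k hxE)
  constructor
  · exact ⟨Set.range DD, hGen, ⟨DD, rfl, fun i => ⟨hQce i, hQnc i, hQinf i⟩, hQmono, hQdnce⟩⟩
  · intro m hm
    interval_cases m
    · exact t0
    · exact t1
    · exact t2
    · exact t3
    · exact t4
    · exact t5
    · exact t6
    · exact t7
    · exact t8
    · exact t9
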